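/- For every λ ∈ ℂ with λ ≠ 0, the determinant of the 3×3 complex matrix M(0,λ) with rows (c(iλ)−1, s(iλ)/(iλ), d(iλ)/(iλ)²), (iλ·d(iλ), c(iλ)−1, s(iλ)/(iλ)), ((iλ)²·s(iλ), iλ·d(iλ), c(iλ)−1) equals 3·(c(iλ) − c(−iλ)). -/

import Mathlib

open Complex

/-- ω = exp(2πi/3), a primitive cube root of unity. -/
noncomputable def ω : ℂ := Complex.exp (2 * Real.pi * Complex.I / 3)

/-- c(z) = (1/3)·∑_{k=1}^{3} exp(ω^k z). -/
noncomputable def cf (z : ℂ) : ℂ :=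
  (1/3) * (Complex.exp (ω ^ 1 * z) + Complex.exp (ω ^ 2 * z) + Complex.exp (ω ^ 3 * z))

/-- s(z) = (1/3)·∑_{k=1}^{3} ω^{-k} exp(ω^k z). -/
noncomputable def sf (z : ℂ) : ℂ :=
  (1/3) * ((ω ^ 1)⁻¹ * Complex.exp (ω ^ 1 * z) + (ω ^ 2)⁻¹ * Complex.exp (ω ^ 2 * z) +
    (ω ^ 3)⁻¹ * Complex.exp (ω ^ 3 * z))

/-- d(z) = (1/3)·∑_{k=1}^{3} ω^k exp(ω^k z). -/
noncomputable def df (z : ℂ) : ℂ :=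
  (1/3) * (ω ^ 1 * Complex.exp (ω ^ 1 * z) + ω ^ 2 * Complex.exp (ω ^ 2 * z) +
    ω ^ 3 * Complex.exp (ω ^ 3 * z))

/-- The boundary-condition matrix M(0,λ) of the periodic problem for i·y‴ = λ³·y. -/
noncomputable def M₀ (lam : ℂ) : Matrix (Fin 3) (Fin 3) ℂ :=
  !![cf (Complex.I * lam) - 1, sf (Complex.I * lam) / (Complex.I * lam),
       df (Complex.I * lam) / (Complex.I * lam) ^ 2;
     Complex.I * lam * df (Complex.I * lam), cf (Complex.I * lam) - 1,
       sf (Complex.I * lam) / (Complex.I * lam);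
     (Complex.I * lam) ^ 2 * sf (Complex.I * lam), Complex.I * lam * df (Complex.I * lam),
       cf (Complex.I * lam) - 1]

lemma omega_cube : ω ^ 3 = 1 := by
  rw [ω, ← Complex.exp_nat_mul]
  have h : ((3 : ℕ) : ℂ) * (2 * Real.pi * Complex.I / 3) = 2 * Real.pi * Complex.I := by
    push_cast; ring
  rw [h, Complex.exp_two_pi_mul_I]

lemma omega_ne_one : ω ≠ 1 := by
  intro h
  have h' : Complex.exp (2 * Real.pi * Complex.I / 3) = 1 := h
  obtain ⟨n, hn⟩ := Complex.exp_eq_one_iff.mp h'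
  have h2 : (2 * Real.pi * Complex.I : ℂ) ≠ 0 := by
    simp [Real.pi_ne_zero, Complex.I_ne_zero]
  have h3 : ((3 * n : ℤ) : ℂ) * (2 * Real.pi * Complex.I) = 1 * (2 * Real.pi * Complex.I) := by
    push_cast
    linear_combination (-3) * hn
  have h4 : ((3 * n : ℤ) : ℂ) = 1 := mul_right_cancel₀ h2 h3
  have h5 : (3 * n : ℤ) = 1 := by exact_mod_cast h4
  omega

lemma omega_sum : ω ^ 2 + ω + 1 = 0 := by
  have h : (ω - 1) * (ω ^ 2 + ω + 1) = 0 := by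
    linear_combination omega_cube
  rcases mul_eq_zero.mp h with h1 | h2
  · exact absurd (sub_eq_zero.mp h1) omega_ne_one
  · exact h2

lemma det3 (C S D z : ℂ) (hz : z ≠ 0) :
    (!![C - 1, S / z, D / z ^ 2;
        z * D, C - 1, S / z;
        z ^ 2 * S, z * D, C - 1]).det
      = (C - 1) ^ 3 + S ^ 3 + D ^ 3 - 3 * (C - 1) * S * D := by
  have hu : z * z⁻¹ = 1 := mul_inv_cancel₀ hz
  simp only [Matrix.det_fin_three, Matrix.of_apply, Matrix.cons_val', Matrix.cons_val_zero,
    Matrix.cons_val_one, Matrix.cons_val_two, Matrix.head_cons, Matrix.tail_cons,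
    Matrix.empty_val', Matrix.cons_val_fin_one, Matrix.head_fin_const, div_eq_mul_inv]
  linear_combination ((S ^ 3 + D ^ 3) * (z * z⁻¹ + 1)
    - (C - 1) * S * D * (z * z⁻¹ + 3)) * hu

lemma key (w a b c : ℂ) (hw : w ^ 2 + w + 1 = 0) (hE : a * b * c = 1) :
    ((1/3) * (a + b + c) - 1) ^ 3 + ((1/3) * (w^2*a + w*b + c)) ^ 3 +
      ((1/3) * (w*a + w^2*b + c)) ^ 3 -
      3 * ((1/3) * (a + b + c) - 1) * ((1/3) * (w^2*a + w*b + c)) *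
        ((1/3) * (w*a + w^2*b + c))
    = 3 * ((1/3) * (a + b + c) - (1/3) * (b*c + a*c + a*b)) := by
  linear_combination hE +
    ((1/3)*b*c - (1/3)*b^2 + (1/9)*b^2*c + (1/27)*b^3 + (1/3)*a*c + (1/3)*a*b
      - (7/9)*a*b*c + (1/9)*a*b^2 - (1/3)*a^2 + (1/9)*a^2*c + (1/9)*a^2*b + (1/27)*a^3
      + (1/3)*w*b^2 - (2/9)*w*b^2*c - (1/27)*w*b^3 - (1/3)*w*a*b + (5/9)*w*a*b*c
      - (1/9)*w*a*b^2 + (1/3)*w*a^2 - (2/9)*w*a^2*c - (1/9)*w*a^2*b - (1/27)*w*a^3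
      + (1/9)*w^2*b^2*c + (1/3)*w^2*a*b - (1/9)*w^2*a*b*c - (1/9)*w^2*a*b^2
      + (1/9)*w^2*a^2*c - (1/9)*w^2*a^2*b - (1/27)*w^3*b^3 + (1/9)*w^3*a*b^2
      + (1/9)*w^3*a^2*b - (1/27)*w^3*a^3 + (1/27)*w^4*b^3 + (1/27)*w^4*a^3) * hw

/-- det M(0,λ) = 3·(c(iλ) − c(−iλ)) for λ ≠ 0. -/
theorem stmt_13 (lam : ℂ) (hlam : lam ≠ 0) :
    (M₀ lam).det = 3 * (cf (Complex.I * lam) - cf (-(Complex.I * lam))) := by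
  set z : ℂ := Complex.I * lam with hzdef
  have hz : z ≠ 0 := mul_ne_zero Complex.I_ne_zero hlam
  have hω0 : ω ≠ 0 := by
    intro h
    have := omega_cube
    rw [h] at this
    simp at this
  have hinv1 : (ω ^ 1)⁻¹ = ω ^ 2 :=
    inv_eq_of_mul_eq_one_right (by linear_combination omega_cube)
  have hinv2 : (ω ^ 2)⁻¹ = ω :=
    inv_eq_of_mul_eq_one_right (by linear_combination omega_cube)
  have hinv3 : (ω ^ 3)⁻¹ = 1 := by rw [omega_cube]; simp
  set E1 : ℂ := Complex.exp (ω * z) with hE1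
  set E2 : ℂ := Complex.exp (ω ^ 2 * z) with hE2
  set E3 : ℂ := Complex.exp z with hE3
  have hE : E1 * E2 * E3 = 1 := by
    rw [hE1, hE2, hE3, ← Complex.exp_add, ← Complex.exp_add]
    rw [show ω * z + ω ^ 2 * z + z = (ω ^ 2 + ω + 1) * z by ring, omega_sum, zero_mul,
      Complex.exp_zero]
  have hcf : cf z = (1/3) * (E1 + E2 + E3) := by
    rw [cf, omega_cube]; simp only [pow_one, one_mul]; rfl
  have hsf : sf z = (1/3) * (ω^2 * E1 + ω * E2 + E3) := by
    rw [sf, hinv1, hinv2, hinv3, omega_cube]; simp only [pow_one, one_mul]; rfl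
  have hdf : df z = (1/3) * (ω * E1 + ω^2 * E2 + E3) := by
    rw [df, omega_cube]; simp only [pow_one, one_mul]; rfl
  have hcfn : cf (-z) = (1/3) * (E2 * E3 + E1 * E3 + E1 * E2) := by
    have h1 : ω ^ 1 * (-z) = ω ^ 2 * z + z := by
      linear_combination (-z) * omega_sum
    have h2 : ω ^ 2 * (-z) = ω * z + z := by
      linear_combination (-z) * omega_sum
    have h3 : ω ^ 3 * (-z) = ω * z + ω ^ 2 * z := by
      linear_combination (-z) * omega_sum + (-z) * omega_cube
    rw [cf, h1, h2, h3, Complex.exp_add, Complex.exp_add, Complex.exp_add]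
  have hdet : (M₀ lam).det = (cf z - 1)^3 + (sf z)^3 + (df z)^3
      - 3 * (cf z - 1) * (sf z) * (df z) :=
    det3 (cf z) (sf z) (df z) z hz
  rw [hdet, hcf, hsf, hdf, hcfn]
  exact key ω E1 E2 E3 omega_sum hE
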